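/- (Differential Hensel's Lemma, unramified case m > 1) Let f ∈ O{x, δ_m} with m > 1, where O = ℂ[[t]] and δ_m = t^m d/dt, and let f̄ ∈ ℂ[x] be f modulo t. Suppose f̄ = g₀ h₀ with g₀, h₀ ∈ ℂ[x] coprime. Then there exist g, h ∈ O{x, δ_m} with f = g h, deg g = deg g₀, ḡ = g₀ and h̄ = h₀. -/

import Mathlib

set_option maxHeartbeats 1000000
set_option synthInstance.maxHeartbeats 1000000

noncomputable section

/-- `K = ℂ((t))`, the field of formal Laurent series. -/
abbrev K : Type := LaurentSeries ℂ

/-- The derivation `d = t * d/dt` on `K`, acting on coefficients by `cₙ ↦ n * cₙ`. -/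
def dd : K →ₗ[ℂ] K where
  toFun f :=
    { coeff := fun n => (n : ℂ) * f.coeff n
      isPWO_support' := f.isPWO_support'.mono (fun n hn => by
        simp only [Function.mem_support, ne_eq] at hn ⊢
        exact fun h => hn (by rw [h, mul_zero])) }
  map_add' f g := by
    ext n
    simp [mul_add]
  map_smul' c f := by
    ext n
    simp [HahnSeries.coeff_smul]
    ring

/-- Multiplication by `a ∈ K` as a `ℂ`-linear endomorphism of `K`. -/
def mulOp (a : K) : Module.End ℂ K where
  toFun f := a * f
  map_add' := mul_add a
  map_smul' c f := by
    simp only [RingHom.id_apply]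
    rw [← HahnSeries.single_zero_mul_eq_smul, ← HahnSeries.single_zero_mul_eq_smul]
    ring

/-- `d = t d/dt` as an endomorphism. -/
def ddE : Module.End ℂ K := dd

/-- The element `t ∈ K`. -/
def tK : K := HahnSeries.single (1 : ℤ) (1 : ℂ)

/-- The element `t^i ∈ K` for `i : ℤ`. -/
def tpow (i : ℤ) : K := HahnSeries.single i (1 : ℂ)

/-- The operator corresponding to the variable `x` of the twisted polynomial ring
`K{x, δ_m}`, i.e. the derivation `δ_m = t^m d/dt = t^(m-1) ⬝ (t d/dt)`. -/
def Xop (m : ℕ) : Module.End ℂ K := mulOp (tK ^ (m - 1)) * ddE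

/-- The inclusion `O = ℂ[[t]] → K`. -/
def ofPS : PowerSeries ℂ →+* K := HahnSeries.ofPowerSeries ℤ ℂ

/-- The operator attached to a twisted polynomial `Σ_{i ≤ n} a_i x^i` with
coefficients `a_i ∈ O = ℂ[[t]]`, in `K{x, δ_m}`. -/
def opO (m n : ℕ) (a : ℕ → PowerSeries ℂ) : Module.End ℂ K :=
  ∑ i ∈ Finset.range (n + 1), mulOp (ofPS (a i)) * (Xop m) ^ i

/-- Reduction mod `t` of a twisted polynomial with coefficients in `O`. -/
def red (n : ℕ) (a : ℕ → PowerSeries ℂ) : Polynomial ℂ :=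
  ∑ i ∈ Finset.range (n + 1), Polynomial.C (PowerSeries.constantCoeff (a i)) * Polynomial.X ^ i

/-- The embedding `K → K`, `t ↦ t^q`, realising `K` as the subfield `ℂ((s^q)) ⊆ ℂ((s))`. -/
def embHom (q : ℕ) (hq : 0 < q) : K →+* K :=
  HahnSeries.embDomainRingHom (AddMonoidHom.mk' (fun n => (q : ℤ) * n) (by intro a b; ring))
    (fun a b h => by
      simpa using mul_left_cancel₀ (by exact_mod_cast hq.ne' : (q : ℤ) ≠ 0) h)
    (fun a b => by
      constructor
      · intro h; exact le_of_mul_le_mul_left h (by exact_mod_cast hq)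
      · intro h; exact mul_le_mul_of_nonneg_left h (by positivity))


open Finset Polynomial

abbrev R := PowerSeries ℂ

lemma dd_coeff (f : K) (z : ℤ) : (dd f).coeff z = (z : ℂ) * f.coeff z := rfl

lemma dd_support (f : K) : (dd f).support ⊆ f.support := by
  intro z hz
  rw [HahnSeries.mem_support] at hz ⊢
  rw [dd_coeff] at hz
  exact fun h => hz (by rw [h, mul_zero])

lemma dd_mul (f g : K) : dd (f * g) = dd f * g + f * dd g := by
  ext z
  rw [HahnSeries.coeff_add,
    HahnSeries.coeff_mul_left' f.isPWO_support' (dd_support f),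
    HahnSeries.coeff_mul_right' g.isPWO_support' (dd_support g),
    dd_coeff, HahnSeries.coeff_mul]
  erw [← Finset.sum_add_distrib]
  rw [Finset.mul_sum]
  apply Finset.sum_congr rfl
  intro ij hij
  rw [Finset.mem_addAntidiagonal] at hij
  rw [dd_coeff, dd_coeff, ← hij.2.2]
  push_cast
  ring

/-- `t d/dt` on power series. -/
def ddPS (a : R) : R := PowerSeries.mk fun N => (N : ℂ) * PowerSeries.coeff N a

/-- `δ_m = t^m d/dt = t^(m-1) (t d/dt)` on power series. -/
def ds (m : ℕ) (a : R) : R := PowerSeries.X ^ (m - 1) * ddPS a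

lemma ofPS_coeff (a : R) (n : ℕ) : (ofPS a).coeff (n : ℤ) = PowerSeries.coeff n a :=
  HahnSeries.ofPowerSeries_apply_coeff a n

lemma ofPS_coeff_neg (a : R) (z : ℤ) (hz : z < 0) : (ofPS a).coeff z = 0 := by
  rw [ofPS, HahnSeries.ofPowerSeries_apply]
  apply HahnSeries.embDomain_notin_range
  rintro ⟨n, rfl⟩
  exact absurd hz (Int.natCast_nonneg n : (0:ℤ) ≤ n).not_gt

lemma ofPS_ddPS (a : R) : ofPS (ddPS a) = dd (ofPS a) := by
  ext z
  rcases lt_or_ge z 0 with hz | hz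
  · rw [ofPS_coeff_neg _ _ hz, dd_coeff, ofPS_coeff_neg _ _ hz, mul_zero]
  · obtain ⟨n, rfl⟩ := Int.eq_ofNat_of_zero_le hz
    rw [ofPS_coeff, dd_coeff, ofPS_coeff, ddPS, PowerSeries.coeff_mk]
    norm_num

lemma ofPS_ds (m : ℕ) (a : R) : ofPS (ds m a) = tK ^ (m - 1) * dd (ofPS a) := by
  have hX : ofPS PowerSeries.X = tK := HahnSeries.ofPowerSeries_X
  rw [ds, map_mul, map_pow, hX, ofPS_ddPS]

lemma mulOp_apply (a f : K) : mulOp a f = a * f := rfl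

lemma mulOp_mul (a b : K) : mulOp (a * b) = mulOp a * mulOp b := by
  refine LinearMap.ext fun f => ?_
  rw [Module.End.mul_apply]
  exact mul_assoc a b f

lemma Xop_apply (m : ℕ) (f : K) : Xop m f = tK ^ (m - 1) * dd f := rfl

lemma Xop_mulOp (m : ℕ) (a : R) :
    Xop m * mulOp (ofPS a) = mulOp (ofPS a) * Xop m + mulOp (ofPS (ds m a)) := by
  refine LinearMap.ext fun f => ?_
  rw [Module.End.mul_apply, LinearMap.add_apply, Module.End.mul_apply]
  rw [Xop_apply, mulOp_apply, mulOp_apply, mulOp_apply, Xop_apply, dd_mul, ofPS_ds]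
  ring

lemma Xop_pow_mulOp (m : ℕ) (a : R) (i : ℕ) :
    (Xop m) ^ i * mulOp (ofPS a) =
      ∑ k ∈ range (i + 1),
        (i.choose k) • (mulOp (ofPS ((ds m)^[k] a)) * (Xop m) ^ (i - k)) := by
  induction i with
  | zero => simp
  | succ i ih =>
    have key : ∀ k ∈ range (i + 1),
        Xop m * ((i.choose k) • (mulOp (ofPS ((ds m)^[k] a)) * (Xop m) ^ (i - k)))
        = (i.choose k) • (mulOp (ofPS ((ds m)^[k] a)) * (Xop m) ^ (i + 1 - k))
          + (i.choose k) • (mulOp (ofPS ((ds m)^[k+1] a)) * (Xop m) ^ (i - k)) := by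
      intro k hk
      rw [mem_range] at hk
      have e0 : (ds m)^[k+1] a = ds m ((ds m)^[k] a) := Function.iterate_succ_apply' (ds m) k a
      rw [mul_smul_comm, ← mul_assoc, Xop_mulOp, add_mul, mul_assoc, ← pow_succ', e0,
        show i - k + 1 = i + 1 - k by omega]
      rw [nsmul_eq_mul, nsmul_eq_mul, nsmul_eq_mul, mul_add]
    calc (Xop m) ^ (i+1) * mulOp (ofPS a) = Xop m * ((Xop m) ^ i * mulOp (ofPS a)) := by
          rw [← mul_assoc, pow_succ']
      _ = ∑ k ∈ range (i + 1),
            ((i.choose k) • (mulOp (ofPS ((ds m)^[k] a)) * (Xop m) ^ (i + 1 - k))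
            + (i.choose k) • (mulOp (ofPS ((ds m)^[k+1] a)) * (Xop m) ^ (i - k))) := by
          rw [ih, Finset.mul_sum]; exact Finset.sum_congr rfl key
      _ = _ := by
          rw [Finset.sum_add_distrib]
          set T : ℕ → Module.End ℂ K := fun k => mulOp (ofPS ((ds m)^[k] a)) * (Xop m) ^ (i + 1 - k) with hT
          have h2 : ∀ k ∈ range (i+1), (i.choose k) • (mulOp (ofPS ((ds m)^[k+1] a)) * (Xop m) ^ (i - k)) = (i.choose k) • T (k+1) := by
            intro k hk
            rw [mem_range] at hk
            simp only [hT]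
            congr 3
            omega
          rw [Finset.sum_congr rfl h2]
          have h3 : ∑ k ∈ range (i+1), i.choose (k+1) • T (k+1) + i.choose 0 • T 0
              = ∑ k ∈ range (i+1), i.choose k • T k := by
            rw [← Finset.sum_range_succ' (fun k => i.choose k • T k), Finset.sum_range_succ]
            simp [Nat.choose_succ_self]
          rw [Finset.sum_range_succ' (fun k => (i+1).choose k • T k)]
          simp only [Nat.choose_succ_succ, add_smul, Nat.choose_zero_right, one_smul,
            Finset.sum_add_distrib]
          rw [← h3]
          simp only [Nat.choose_zero_right, one_smul]
          abel

example : True := trivial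
/-- Coefficients of the twisted product of two twisted polynomials. -/
def twmul (m d e : ℕ) (b c : ℕ → R) (l : ℕ) : R :=
  ∑ i ∈ range (d+1), ∑ j ∈ range (e+1), ∑ k ∈ range (i+1),
    if i + j - k = l then (i.choose k) • (b i * (ds m)^[k] (c j)) else 0

lemma mulOp_add (x y : K) : mulOp (x + y) = mulOp x + mulOp y :=
  LinearMap.ext fun f => add_mul x y f

/-- `mulOp` as an additive monoid hom. -/
def mulOpAdd : K →+ Module.End ℂ K := AddMonoidHom.mk' mulOp mulOp_add

lemma mulOp_zero : mulOp (0 : K) = 0 := map_zero mulOpAdd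

lemma mulOp_sum {ι : Type*} (s : Finset ι) (f : ι → K) :
    mulOp (∑ i ∈ s, f i) = ∑ i ∈ s, mulOp (f i) := map_sum mulOpAdd f s

lemma mulOp_nsmul (n : ℕ) (a : K) : mulOp (n • a) = n • mulOp a := map_nsmul mulOpAdd n a

lemma opO_mul (m d e : ℕ) (b c : ℕ → R) :
    opO m d b * opO m e c = opO m (d + e) (twmul m d e b c) := by
  set F : ℕ → ℕ → ℕ → ℕ → Module.End ℂ K := fun i j k l =>
    if i + j - k = l then (i.choose k) • (mulOp (ofPS (b i * (ds m)^[k] (c j))) * Xop m ^ l)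
    else 0 with hF
  have hL : opO m d b * opO m e c
      = ∑ i ∈ range (d+1), ∑ j ∈ range (e+1), ∑ k ∈ range (i+1),
          ∑ l ∈ range (d+e+1), F i j k l := by
    rw [opO, opO, Finset.sum_mul_sum]
    refine Finset.sum_congr rfl fun i hi => Finset.sum_congr rfl fun j hj => ?_
    rw [mem_range] at hi hj
    have : ∀ k ∈ range (i+1), ∑ l ∈ range (d+e+1), F i j k l
        = (i.choose k) • (mulOp (ofPS (b i * (ds m)^[k] (c j))) * Xop m ^ (i + j - k)) := by
      intro k hk
      rw [mem_range] at hk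
      rw [hF]
      rw [Finset.sum_ite_eq (range (d+e+1)) (i+j-k)
        (fun l => (i.choose k) • (mulOp (ofPS (b i * (ds m)^[k] (c j))) * Xop m ^ l))]
      rw [if_pos (by rw [mem_range]; omega)]
    rw [Finset.sum_congr rfl this]
    -- now show product = ∑ k ...
    calc (mulOp (ofPS (b i)) * Xop m ^ i) * (mulOp (ofPS (c j)) * Xop m ^ j)
        = mulOp (ofPS (b i)) * (Xop m ^ i * mulOp (ofPS (c j))) * Xop m ^ j := by
          rw [mul_assoc, mul_assoc, mul_assoc]
      _ = ∑ k ∈ range (i+1),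
            (i.choose k) • (mulOp (ofPS (b i * (ds m)^[k] (c j))) * Xop m ^ (i + j - k)) := by
          rw [Xop_pow_mulOp, Finset.mul_sum, Finset.sum_mul]
          refine Finset.sum_congr rfl fun k hk => ?_
          rw [mem_range] at hk
          rw [mul_smul_comm, smul_mul_assoc]
          congr 1
          rw [map_mul, mulOp_mul, mul_assoc, mul_assoc, ← pow_add,
            show i - k + j = i + j - k by omega, mul_assoc]
  have hR : opO m (d+e) (twmul m d e b c)
      = ∑ l ∈ range (d+e+1), ∑ i ∈ range (d+1), ∑ j ∈ range (e+1), ∑ k ∈ range (i+1),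
          F i j k l := by
    rw [opO]
    refine Finset.sum_congr rfl fun l _ => ?_
    rw [twmul]
    rw [map_sum, mulOp_sum, Finset.sum_mul]
    refine Finset.sum_congr rfl fun i _ => ?_
    rw [map_sum, mulOp_sum, Finset.sum_mul]
    refine Finset.sum_congr rfl fun j _ => ?_
    rw [map_sum, mulOp_sum, Finset.sum_mul]
    refine Finset.sum_congr rfl fun k _ => ?_
    by_cases h : i + j - k = l
    · simp only [hF, if_pos h, map_nsmul, mulOp_nsmul, smul_mul_assoc]
    · simp only [hF, if_neg h, map_zero, mulOp_zero, zero_mul]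
  rw [hL, hR]
  calc ∑ i ∈ range (d+1), ∑ j ∈ range (e+1), ∑ k ∈ range (i+1), ∑ l ∈ range (d+e+1), F i j k l
      = ∑ i ∈ range (d+1), ∑ j ∈ range (e+1), ∑ l ∈ range (d+e+1), ∑ k ∈ range (i+1), F i j k l := by
        exact Finset.sum_congr rfl fun i _ => Finset.sum_congr rfl fun j _ => Finset.sum_comm
    _ = ∑ i ∈ range (d+1), ∑ l ∈ range (d+e+1), ∑ j ∈ range (e+1), ∑ k ∈ range (i+1), F i j k l := by
        exact Finset.sum_congr rfl fun i _ => Finset.sum_comm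
    _ = ∑ l ∈ range (d+e+1), ∑ i ∈ range (d+1), ∑ j ∈ range (e+1), ∑ k ∈ range (i+1), F i j k l :=
        Finset.sum_comm
lemma ds_coeff (m : ℕ) (x : R) (q : ℕ) :
    PowerSeries.coeff q (ds m x) =
      if m - 1 ≤ q then ((q - (m-1) : ℕ) : ℂ) * PowerSeries.coeff (q - (m-1)) x else 0 := by
  rw [ds, mul_comm, PowerSeries.coeff_mul_X_pow']
  split_ifs with h
  · rw [ddPS, PowerSeries.coeff_mk]
  · rfl

lemma ds_iter_coeff_zero (m : ℕ) (hm : 1 < m) (k : ℕ) (hk : 1 ≤ k) (x : R) :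
    PowerSeries.coeff 0 ((ds m)^[k] x) = 0 := by
  obtain ⟨k, rfl⟩ : ∃ k', k = k' + 1 := ⟨k-1, by omega⟩
  rw [Function.iterate_succ_apply', ds_coeff, if_neg (by omega)]

lemma ds_iter_coeff_congr (m : ℕ) (k : ℕ) (hk : 1 ≤ k) (x y : R) (q : ℕ)
    (hm : 1 < m)
    (h : ∀ r < q, PowerSeries.coeff r x = PowerSeries.coeff r y) :
    PowerSeries.coeff q ((ds m)^[k] x) = PowerSeries.coeff q ((ds m)^[k] y) := by
  induction k generalizing q with
  | zero => omega
  | succ k ih =>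
    rcases Nat.eq_zero_or_pos k with rfl | hk'
    · simp only [zero_add, Function.iterate_one]
      rw [ds_coeff, ds_coeff]
      split_ifs with hq
      · rw [h _ (by omega)]
      · rfl
    · rw [Function.iterate_succ_apply', Function.iterate_succ_apply', ds_coeff, ds_coeff]
      split_ifs with hq
      · rw [ih hk' _ (fun r hr => h r (by omega))]
      · rfl

/-- Bézout solving with degree control. -/
lemma bezout_solve (g₀ h₀ : Polynomial ℂ) (hg : g₀ ≠ 0) (hcop : IsCoprime g₀ h₀)
    (e : ℕ) (he : h₀.degree ≤ (e : ℕ)) (P : Polynomial ℂ)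
    (hP : P.degree ≤ ((g₀.natDegree + e : ℕ) : WithBot ℕ)) :
    ∃ G H : Polynomial ℂ, g₀ * H + G * h₀ = P ∧
      G.degree < g₀.degree ∧ H.degree ≤ (e : ℕ) := by
  obtain ⟨u, v, huv⟩ := hcop
  set g₁ : Polynomial ℂ := g₀ * Polynomial.C (g₀.leadingCoeff)⁻¹ with hg₁
  have hg₁m : g₁.Monic := Polynomial.monic_mul_leadingCoeff_inv hg
  set G : Polynomial ℂ := (P * v) %ₘ g₁ with hG
  set Q : Polynomial ℂ := (P * v) /ₘ g₁ with hQ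
  have hdiv : G + g₁ * Q = P * v := Polynomial.modByMonic_add_div (P * v) g₁
  have hdegG : G.degree < g₀.degree := by
    have h1 : G.degree < g₁.degree := Polynomial.degree_modByMonic_lt (P * v) hg₁m
    have h2 : g₁.degree = g₀.degree := by
      rw [hg₁]
      rw [Polynomial.degree_mul, Polynomial.degree_C (by
        simp [Polynomial.leadingCoeff_ne_zero.mpr hg, inv_ne_zero])]
      simp
    rwa [h2] at h1
  refine ⟨G, P * u + Polynomial.C (g₀.leadingCoeff)⁻¹ * Q * h₀, ?_, hdegG, ?_⟩
  · have : P = P * (u * g₀ + v * h₀) := by rw [huv, mul_one]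
    calc g₀ * (P * u + Polynomial.C (g₀.leadingCoeff)⁻¹ * Q * h₀) + G * h₀
        = P * (u * g₀) + (g₁ * Q + G) * h₀ := by rw [hg₁]; ring
      _ = P * (u * g₀) + (P * v) * h₀ := by rw [add_comm (g₁ * Q) G, hdiv]
      _ = P * (u * g₀ + v * h₀) := by ring
      _ = P := by rw [huv, mul_one]
  · -- degree bound on H
    set H : Polynomial ℂ := P * u + Polynomial.C (g₀.leadingCoeff)⁻¹ * Q * h₀ with hH
    have hfac : g₀ * H = P - G * h₀ := by
      have : g₀ * H + G * h₀ = P := by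
        calc g₀ * H + G * h₀
            = P * (u * g₀) + (g₁ * Q + G) * h₀ := by rw [hH, hg₁]; ring
          _ = P * (u * g₀) + (P * v) * h₀ := by rw [add_comm (g₁ * Q) G, hdiv]
          _ = P * (u * g₀ + v * h₀) := by ring
          _ = P := by rw [huv, mul_one]
      linear_combination this
    rcases eq_or_ne H 0 with h0 | h0
    · simp [h0]
    have hdeg1 : (g₀ * H).degree ≤ ((g₀.natDegree + e : ℕ) : WithBot ℕ) := by
      rw [hfac]
      refine le_trans (Polynomial.degree_sub_le _ _) (max_le hP ?_)
      refine le_trans (Polynomial.degree_mul_le _ _) ?_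
      rcases eq_or_ne G 0 with hG0 | hG0
      · simp [hG0]
      · rw [Polynomial.degree_eq_natDegree hG0]
        calc (G.natDegree : WithBot ℕ) + h₀.degree ≤ (G.natDegree : WithBot ℕ) + (e : ℕ) :=
              add_le_add_right he _
          _ ≤ ((g₀.natDegree + e : ℕ) : WithBot ℕ) := by
              have h3 : G.natDegree < g₀.natDegree := Polynomial.natDegree_lt_natDegree hG0 hdegG
              rw [← Nat.cast_add]
              exact_mod_cast (by omega : G.natDegree + e ≤ g₀.natDegree + e)
    have : g₀.degree + H.degree ≤ ((g₀.natDegree : ℕ) : WithBot ℕ) + (e : ℕ) := by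
      rw [← Polynomial.degree_mul]
      exact le_trans hdeg1 (by rw [← Nat.cast_add])
    rw [Polynomial.degree_eq_natDegree hg] at this
    rw [Polynomial.degree_eq_natDegree h0] at this ⊢
    have h5 : (g₀.natDegree + H.natDegree : ℕ) ≤ (g₀.natDegree + e : ℕ) := by
      exact_mod_cast this
    exact_mod_cast (by omega : H.natDegree ≤ e)
open scoped Classical in
/-- Chooser for Bézout solutions. -/
def bez (g₀ h₀ : Polynomial ℂ) (e : ℕ) (P : Polynomial ℂ) : Polynomial ℂ × Polynomial ℂ :=
  if h : ∃ G H : Polynomial ℂ, g₀ * H + G * h₀ = P ∧ G.degree < g₀.degree ∧ H.degree ≤ (e : ℕ)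
  then (h.choose, h.choose_spec.choose) else (0, 0)

lemma bez_spec (g₀ h₀ : Polynomial ℂ) (hg : g₀ ≠ 0) (hcop : IsCoprime g₀ h₀)
    (e : ℕ) (he : h₀.degree ≤ (e : ℕ)) (P : Polynomial ℂ)
    (hP : P.degree ≤ ((g₀.natDegree + e : ℕ) : WithBot ℕ)) :
    g₀ * (bez g₀ h₀ e P).2 + (bez g₀ h₀ e P).1 * h₀ = P ∧
      (bez g₀ h₀ e P).1.degree < g₀.degree ∧ (bez g₀ h₀ e P).2.degree ≤ (e : ℕ) := by
  have hex := bezout_solve g₀ h₀ hg hcop e he P hP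
  obtain ⟨G, H, h1, h2, h3⟩ := hex
  have hx : ∃ G H : Polynomial ℂ, g₀ * H + G * h₀ = P ∧ G.degree < g₀.degree ∧
      H.degree ≤ (e : ℕ) := ⟨G, H, h1, h2, h3⟩
  classical
  rw [bez]
  rw [dif_pos hx]
  exact ⟨hx.choose_spec.choose_spec.1, hx.choose_spec.choose_spec.2.1,
    hx.choose_spec.choose_spec.2.2⟩

/-- Truncation of coefficient functions below level `N`. -/
def tb (x : ℕ → R) (N : ℕ) : ℕ → R := fun i =>
  PowerSeries.mk fun p => if p < N then PowerSeries.coeff p (x i) else 0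

lemma tb_coeff (x : ℕ → R) (N i p : ℕ) :
    PowerSeries.coeff p (tb x N i) =
      if p < N then PowerSeries.coeff p (x i) else 0 := PowerSeries.coeff_mk _ _

/-- The Hensel recursion: at step `N+1`, solve for the `t^(N+1)`-coefficients of the factors. -/
def henselStep (m n : ℕ) (a : ℕ → R) (g₀ h₀ : Polynomial ℂ) : ℕ → Polynomial ℂ × Polynomial ℂ
  | 0 => (g₀, h₀)
  | (N+1) =>
      let d := g₀.natDegree
      let bN : ℕ → R := fun i => PowerSeries.mk fun p =>
        if p < N+1 then ((henselStep m n a g₀ h₀ (min p N)).1).coeff i else 0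
      let cN : ℕ → R := fun j => PowerSeries.mk fun p =>
        if p < N+1 then ((henselStep m n a g₀ h₀ (min p N)).2).coeff j else 0
      bez g₀ h₀ (n - d)
        (∑ l ∈ range (n+1),
          Polynomial.C (PowerSeries.coeff (N+1) (a l)
            - PowerSeries.coeff (N+1) (twmul m d (n-d) bN cN l)) * Polynomial.X ^ l)
  termination_by N => N
  decreasing_by all_goals exact Nat.lt_succ_of_le (min_le_right _ _)

variable (m n : ℕ) (a : ℕ → R) (g₀ h₀ : Polynomial ℂ)

/-- The coefficient function of the first factor. -/
def bb : ℕ → R := fun i =>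
  PowerSeries.mk fun N => ((henselStep m n a g₀ h₀ N).1).coeff i

/-- The coefficient function of the second factor. -/
def cc : ℕ → R := fun j =>
  PowerSeries.mk fun N => ((henselStep m n a g₀ h₀ N).2).coeff j

lemma bb_coeff (i N : ℕ) :
    PowerSeries.coeff N (bb m n a g₀ h₀ i) = ((henselStep m n a g₀ h₀ N).1).coeff i :=
  PowerSeries.coeff_mk _ _

lemma cc_coeff (j N : ℕ) :
    PowerSeries.coeff N (cc m n a g₀ h₀ j) = ((henselStep m n a g₀ h₀ N).2).coeff j :=
  PowerSeries.coeff_mk _ _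

lemma henselStep_succ (N : ℕ) :
    henselStep m n a g₀ h₀ (N+1) = bez g₀ h₀ (n - g₀.natDegree)
      (∑ l ∈ range (n+1),
        Polynomial.C (PowerSeries.coeff (N+1) (a l)
          - PowerSeries.coeff (N+1) (twmul m g₀.natDegree (n - g₀.natDegree)
              (tb (bb m n a g₀ h₀) (N+1)) (tb (cc m n a g₀ h₀) (N+1)) l))
        * Polynomial.X ^ l) := by
  rw [henselStep]
  have e1 : (fun i => PowerSeries.mk fun p =>
      if p < N+1 then ((henselStep m n a g₀ h₀ (min p N)).1).coeff i else 0)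
      = tb (bb m n a g₀ h₀) (N+1) := by
    funext i
    ext p
    rw [PowerSeries.coeff_mk, tb_coeff, bb_coeff]
    split_ifs with h
    · rw [min_eq_left (by omega)]
    · rfl
  have e2 : (fun j => PowerSeries.mk fun p =>
      if p < N+1 then ((henselStep m n a g₀ h₀ (min p N)).2).coeff j else 0)
      = tb (cc m n a g₀ h₀) (N+1) := by
    funext j
    ext p
    rw [PowerSeries.coeff_mk, tb_coeff, cc_coeff]
    split_ifs with h
    · rw [min_eq_left (by omega)]
    · rfl
  rw [e1, e2]
lemma sum_C_X_coeff (n : ℕ) (f : ℕ → ℂ) (l : ℕ) (hl : l ≤ n) :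
    (∑ i ∈ range (n+1), Polynomial.C (f i) * Polynomial.X ^ i).coeff l = f l := by
  rw [Polynomial.finset_sum_coeff]
  have : ∀ i ∈ range (n+1), (Polynomial.C (f i) * Polynomial.X ^ i).coeff l
      = if l = i then f i else 0 := by
    intro i _
    rw [Polynomial.coeff_C_mul, Polynomial.coeff_X_pow, mul_ite, mul_one, mul_zero]
  rw [Finset.sum_congr rfl this, Finset.sum_ite_eq (range (n+1)) l f,
    if_pos (mem_range.mpr (by omega))]

lemma sum_C_X_degree (n : ℕ) (f : ℕ → ℂ) :
    (∑ i ∈ range (n+1), Polynomial.C (f i) * Polynomial.X ^ i).degree ≤ (n : WithBot ℕ) := by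
  refine le_trans (Polynomial.degree_sum_le _ _) ?_
  refine Finset.sup_le fun i hi => ?_
  rw [mem_range] at hi
  rw [Polynomial.C_mul_X_pow_eq_monomial]
  refine le_trans (Polynomial.degree_monomial_le i (f i)) ?_
  exact_mod_cast Nat.lt_succ_iff.mp hi

lemma twmul_coeff (m d e : ℕ) (b c : ℕ → R) (l N : ℕ) :
    PowerSeries.coeff N (twmul m d e b c l) =
      ∑ i ∈ range (d+1), ∑ j ∈ range (e+1), ∑ k ∈ range (i+1),
        if i + j - k = l then
          (i.choose k : ℂ) * ∑ pq ∈ Finset.HasAntidiagonal.antidiagonal N,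
            PowerSeries.coeff pq.1 (b i) * PowerSeries.coeff pq.2 ((ds m)^[k] (c j))
        else 0 := by
  rw [twmul, map_sum]
  refine Finset.sum_congr rfl fun i _ => ?_
  rw [map_sum]
  refine Finset.sum_congr rfl fun j _ => ?_
  rw [map_sum]
  refine Finset.sum_congr rfl fun k _ => ?_
  rw [apply_ite (PowerSeries.coeff N), map_zero, map_nsmul, PowerSeries.coeff_mul,
    nsmul_eq_mul]

lemma double_sum_mul (G H : Polynomial ℂ) (d e l : ℕ) (hG : G.natDegree ≤ d)
    (hH : H.natDegree ≤ e) (hl : l ≤ d + e) :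
    (∑ i ∈ range (d+1), ∑ j ∈ range (e+1),
      if i + j = l then G.coeff i * H.coeff j else 0) = (G * H).coeff l := by
  rw [Polynomial.coeff_mul, ← Finset.sum_product']
  rw [← Finset.sum_filter (fun p : ℕ × ℕ => p.1 + p.2 = l)
    (fun p : ℕ × ℕ => G.coeff p.1 * H.coeff p.2)]
  refine Finset.sum_subset ?_ ?_
  · intro p hp
    rw [Finset.mem_filter] at hp
    exact Finset.HasAntidiagonal.mem_antidiagonal.mpr hp.2
  · intro p hp hnp
    have hpl := Finset.HasAntidiagonal.mem_antidiagonal.mp hp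
    have hns : p ∉ range (d+1) ×ˢ range (e+1) := fun hmem => hnp (Finset.mem_filter.mpr ⟨hmem, hpl⟩)
    rw [Finset.mem_product, mem_range, mem_range] at hns
    rcases not_and_or.mp hns with h | h
    · rw [Polynomial.coeff_eq_zero_of_natDegree_lt (lt_of_le_of_lt hG (by omega)), zero_mul]
    · rw [Polynomial.coeff_eq_zero_of_natDegree_lt (lt_of_le_of_lt hH (by omega)), mul_zero]
lemma hensel0 (m n : ℕ) (a : ℕ → R) (g₀ h₀ : Polynomial ℂ) :
    henselStep m n a g₀ h₀ 0 = (g₀, h₀) := by rw [henselStep]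

variable (hg : g₀ ≠ 0) (hcop : IsCoprime g₀ h₀) (hd : g₀.natDegree ≤ n)
  (he : h₀.natDegree ≤ n - g₀.natDegree)

include hg hcop hd he in
lemma henselStep_spec (N : ℕ) :
    g₀ * (henselStep m n a g₀ h₀ (N+1)).2 + (henselStep m n a g₀ h₀ (N+1)).1 * h₀
      = ∑ l ∈ range (n+1), Polynomial.C (PowerSeries.coeff (N+1) (a l)
          - PowerSeries.coeff (N+1) (twmul m g₀.natDegree (n - g₀.natDegree)
              (tb (bb m n a g₀ h₀) (N+1)) (tb (cc m n a g₀ h₀) (N+1)) l)) * Polynomial.X ^ l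
    ∧ (henselStep m n a g₀ h₀ (N+1)).1.degree < g₀.degree
    ∧ (henselStep m n a g₀ h₀ (N+1)).2.degree ≤ ((n - g₀.natDegree : ℕ) : WithBot ℕ) := by
  rw [henselStep_succ]
  refine bez_spec g₀ h₀ hg hcop _ ?_ _ ?_
  · exact le_trans Polynomial.degree_le_natDegree (by exact_mod_cast he)
  · refine le_trans (sum_C_X_degree n _) ?_
    exact_mod_cast (by omega : n ≤ g₀.natDegree + (n - g₀.natDegree))

include hg hcop hd he in
lemma Gbound (N : ℕ) : (henselStep m n a g₀ h₀ N).1.natDegree ≤ g₀.natDegree := by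
  cases N with
  | zero => rw [hensel0]
  | succ N =>
    have h1 := (henselStep_spec m n a g₀ h₀ hg hcop hd he N).2.1
    rw [Polynomial.degree_eq_natDegree hg] at h1
    exact Polynomial.natDegree_le_iff_degree_le.mpr h1.le

include hg hcop hd he in
lemma Hbound (N : ℕ) : (henselStep m n a g₀ h₀ N).2.natDegree ≤ n - g₀.natDegree := by
  cases N with
  | zero => rw [hensel0]; exact he
  | succ N =>
    exact Polynomial.natDegree_le_iff_degree_le.mpr
      (henselStep_spec m n a g₀ h₀ hg hcop hd he N).2.2

include hg hcop hd he in
lemma crux (hm : 1 < m) (N : ℕ) (hN : 1 ≤ N) (l : ℕ) (hl : l ≤ n) :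
    PowerSeries.coeff N (twmul m g₀.natDegree (n - g₀.natDegree)
        (bb m n a g₀ h₀) (cc m n a g₀ h₀) l)
      = PowerSeries.coeff N (twmul m g₀.natDegree (n - g₀.natDegree)
          (tb (bb m n a g₀ h₀) N) (tb (cc m n a g₀ h₀) N) l)
        + (g₀ * (henselStep m n a g₀ h₀ N).2
            + (henselStep m n a g₀ h₀ N).1 * h₀).coeff l := by
  set B := bb m n a g₀ h₀ with hB
  set Cc := cc m n a g₀ h₀ with hCc
  set d := g₀.natDegree with hdd
  set e := n - g₀.natDegree with hee
  rw [← sub_eq_iff_eq_add']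
  rw [twmul_coeff, twmul_coeff]
  simp only [← Finset.sum_sub_distrib]
  have step1 : ∀ i ∈ range (d+1), ∀ j ∈ range (e+1),
      (∑ k ∈ range (i+1),
        ((if i + j - k = l then
          (i.choose k : ℂ) * ∑ pq ∈ Finset.HasAntidiagonal.antidiagonal N,
            PowerSeries.coeff pq.1 (B i) * PowerSeries.coeff pq.2 ((ds m)^[k] (Cc j))
          else 0)
        - (if i + j - k = l then
          (i.choose k : ℂ) * ∑ pq ∈ Finset.HasAntidiagonal.antidiagonal N,
            PowerSeries.coeff pq.1 (tb B N i) * PowerSeries.coeff pq.2 ((ds m)^[k] (tb Cc N j))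
          else 0)))
      = if i + j = l then
          ((henselStep m n a g₀ h₀ N).1.coeff i * h₀.coeff j
            + g₀.coeff i * (henselStep m n a g₀ h₀ N).2.coeff j) else 0 := by
    intro i hi j hj
    rw [mem_range] at hi hj
    rw [Finset.sum_eq_single_of_mem 0 (mem_range.mpr (by omega))]
    · -- main term k = 0
      simp only [Nat.sub_zero, Nat.choose_zero_right, Nat.cast_one, one_mul,
        Function.iterate_zero, id_eq]
      by_cases hij : i + j = l
      · rw [if_pos hij, if_pos hij, if_pos hij]
        rw [Finset.Nat.sum_antidiagonal_eq_sum_range_succ_mk,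
          Finset.Nat.sum_antidiagonal_eq_sum_range_succ_mk, ← Finset.sum_sub_distrib]
        rw [Finset.sum_range_succ]
        have hmid : ∑ p ∈ range N,
            (PowerSeries.coeff p (B i) * PowerSeries.coeff (N - p) (Cc j)
              - PowerSeries.coeff p (tb B N i) * PowerSeries.coeff (N - p) (tb Cc N j))
            = PowerSeries.coeff 0 (B i) * PowerSeries.coeff N (Cc j)
              - PowerSeries.coeff 0 (tb B N i) * PowerSeries.coeff N (tb Cc N j) := by
          refine Finset.sum_eq_single_of_mem 0 (mem_range.mpr (by omega)) ?_
          intro p hp hp0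
          rw [mem_range] at hp
          rw [tb_coeff, if_pos hp, tb_coeff, if_pos (by omega), sub_self]
        rw [hmid]
        dsimp only
        have e1 : PowerSeries.coeff 0 (tb B N i) = PowerSeries.coeff 0 (B i) := by
          rw [tb_coeff, if_pos (by omega)]
        have e2 : PowerSeries.coeff N (tb Cc N j) = 0 := by
          rw [tb_coeff, if_neg (by omega)]
        have e3 : PowerSeries.coeff N (tb B N i) = 0 := by
          rw [tb_coeff, if_neg (by omega)]
        have e4 : PowerSeries.coeff 0 (B i) = g₀.coeff i := by
          rw [hB, bb_coeff, hensel0]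
        have e5 : PowerSeries.coeff 0 (Cc j) = h₀.coeff j := by
          rw [hCc, cc_coeff, hensel0]
        have e6 : PowerSeries.coeff N (B i) = (henselStep m n a g₀ h₀ N).1.coeff i := by
          rw [hB, bb_coeff]
        have e7 : PowerSeries.coeff N (Cc j) = (henselStep m n a g₀ h₀ N).2.coeff j := by
          rw [hCc, cc_coeff]
        simp only [Nat.sub_self, e1, e2, e3, e4, e5, e6, e7]
        ring
      · rw [if_neg hij, if_neg hij, if_neg hij, sub_zero]
    · -- k ≠ 0 terms vanish
      intro k hk hk0
      rw [mem_range] at hk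
      have hS : ∑ pq ∈ Finset.HasAntidiagonal.antidiagonal N,
          PowerSeries.coeff pq.1 (B i) * PowerSeries.coeff pq.2 ((ds m)^[k] (Cc j))
          = ∑ pq ∈ Finset.HasAntidiagonal.antidiagonal N,
            PowerSeries.coeff pq.1 (tb B N i) * PowerSeries.coeff pq.2 ((ds m)^[k] (tb Cc N j)) := by
        refine Finset.sum_congr rfl fun pq hpq => ?_
        have hpqN : pq.1 + pq.2 = N := Finset.HasAntidiagonal.mem_antidiagonal.mp hpq
        rcases Nat.lt_or_ge pq.1 N with h1 | h1
        · rw [tb_coeff, if_pos h1]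
          congr 1
          refine ds_iter_coeff_congr m k (by omega) _ _ _ hm fun r hr => ?_
          rw [tb_coeff, if_pos (by omega)]
        · have h2 : pq.2 = 0 := by omega
          rw [h2, ds_iter_coeff_zero m hm k (by omega), ds_iter_coeff_zero m hm k (by omega),
            mul_zero, mul_zero]
      rw [hS, sub_self]
  rw [Finset.sum_congr rfl fun i hi => Finset.sum_congr rfl (step1 i hi)]
  have split : ∀ i ∈ range (d+1), ∀ j ∈ range (e+1),
      (if i + j = l then
        ((henselStep m n a g₀ h₀ N).1.coeff i * h₀.coeff j
          + g₀.coeff i * (henselStep m n a g₀ h₀ N).2.coeff j) else 0)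
      = (if i + j = l then (henselStep m n a g₀ h₀ N).1.coeff i * h₀.coeff j else 0)
        + (if i + j = l then g₀.coeff i * (henselStep m n a g₀ h₀ N).2.coeff j else 0) := by
    intro i _ j _
    split_ifs <;> simp
  rw [Finset.sum_congr rfl fun i hi => Finset.sum_congr rfl (split i hi)]
  simp only [Finset.sum_add_distrib]
  rw [double_sum_mul _ _ d e l (Gbound m n a g₀ h₀ hg hcop hd he N) he (by omega),
    double_sum_mul _ _ d e l le_rfl (Hbound m n a g₀ h₀ hg hcop hd he N) (by omega),
    Polynomial.coeff_add]
  ring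
include hg hcop hd he in
lemma twmul_eq (hm : 1 < m) (hfact : red n a = g₀ * h₀) (l : ℕ) (hl : l ≤ n) :
    twmul m g₀.natDegree (n - g₀.natDegree) (bb m n a g₀ h₀) (cc m n a g₀ h₀) l = a l := by
  ext N
  cases N with
  | zero =>
    rw [twmul_coeff]
    set d := g₀.natDegree with hdd
    set e := n - g₀.natDegree with hee
    have step1 : ∀ i ∈ range (d+1), ∀ j ∈ range (e+1),
        (∑ k ∈ range (i+1),
          if i + j - k = l then
            (i.choose k : ℂ) * ∑ pq ∈ Finset.HasAntidiagonal.antidiagonal 0,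
              PowerSeries.coeff pq.1 (bb m n a g₀ h₀ i)
                * PowerSeries.coeff pq.2 ((ds m)^[k] (cc m n a g₀ h₀ j))
          else 0)
        = if i + j = l then g₀.coeff i * h₀.coeff j else 0 := by
      intro i hi j hj
      rw [mem_range] at hi hj
      rw [Finset.sum_eq_single_of_mem 0 (mem_range.mpr (by omega))]
      · simp only [Nat.sub_zero, Nat.choose_zero_right, Nat.cast_one, one_mul,
          Function.iterate_zero, id_eq, Finset.Nat.antidiagonal_zero, Finset.sum_singleton]
        rw [bb_coeff, cc_coeff, hensel0]
      · intro k hk hk0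
        rw [Finset.Nat.antidiagonal_zero, Finset.sum_singleton]
        have : PowerSeries.coeff (0:ℕ) ((ds m)^[k] (cc m n a g₀ h₀ j)) = 0 :=
          ds_iter_coeff_zero m hm k (by omega) _
        rw [this, mul_zero, mul_zero, ite_self]
    rw [Finset.sum_congr rfl fun i hi => Finset.sum_congr rfl (step1 i hi)]
    rw [double_sum_mul g₀ h₀ d e l le_rfl he (by omega), ← hfact]
    have : (red n a).coeff l = PowerSeries.constantCoeff (a l) :=
      sum_C_X_coeff n _ l hl
    rw [this, PowerSeries.coeff_zero_eq_constantCoeff]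
  | succ N =>
    have hcrux := crux m n a g₀ h₀ hg hcop hd he hm (N+1) (by omega) l hl
    have hspec := (henselStep_spec m n a g₀ h₀ hg hcop hd he N).1
    rw [hcrux, hspec, sum_C_X_coeff n _ l hl]
    ring
theorem stmt_4' (m : ℕ) (hm : 1 < m) (n : ℕ) (a : ℕ → PowerSeries ℂ)
    (g₀ h₀ : Polynomial ℂ) (hf0 : red n a ≠ 0) (hfact : red n a = g₀ * h₀)
    (hcop : IsCoprime g₀ h₀) :
    ∃ b c : ℕ → PowerSeries ℂ,
      opO m n a = opO m g₀.natDegree b * opO m (n - g₀.natDegree) c ∧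
      red g₀.natDegree b = g₀ ∧ red (n - g₀.natDegree) c = h₀ := by
  have hgh : g₀ * h₀ ≠ 0 := by rw [← hfact]; exact hf0
  have hg : g₀ ≠ 0 := left_ne_zero_of_mul hgh
  have hh : h₀ ≠ 0 := right_ne_zero_of_mul hgh
  have hrn : (red n a).natDegree ≤ n :=
    Polynomial.natDegree_le_iff_degree_le.mpr (sum_C_X_degree n _)
  have hmul : g₀.natDegree + h₀.natDegree ≤ n := by
    rw [← Polynomial.natDegree_mul hg hh, ← hfact]; exact hrn
  have hd : g₀.natDegree ≤ n := by omega
  have he : h₀.natDegree ≤ n - g₀.natDegree := by omega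
  refine ⟨bb m n a g₀ h₀, cc m n a g₀ h₀, ?_, ?_, ?_⟩
  · rw [opO_mul]
    have hde : g₀.natDegree + (n - g₀.natDegree) = n := by omega
    rw [hde, opO, opO]
    refine Finset.sum_congr rfl fun i hi => ?_
    rw [mem_range] at hi
    rw [twmul_eq m n a g₀ h₀ hg hcop hd he hm hfact i (by omega)]
  · rw [red]
    have key : ∀ i, PowerSeries.constantCoeff (bb m n a g₀ h₀ i) = g₀.coeff i := by
      intro i
      rw [← PowerSeries.coeff_zero_eq_constantCoeff_apply, bb_coeff, hensel0]
    calc ∑ i ∈ range (g₀.natDegree + 1),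
          Polynomial.C (PowerSeries.constantCoeff (bb m n a g₀ h₀ i)) * Polynomial.X ^ i
        = ∑ i ∈ range (g₀.natDegree + 1), Polynomial.monomial i (g₀.coeff i) := by
          refine Finset.sum_congr rfl fun i _ => ?_
          rw [key, Polynomial.C_mul_X_pow_eq_monomial]
      _ = g₀ := (Polynomial.as_sum_range' g₀ (g₀.natDegree + 1) (by omega)).symm
  · rw [red]
    have key : ∀ j, PowerSeries.constantCoeff (cc m n a g₀ h₀ j) = h₀.coeff j := by
      intro j
      rw [← PowerSeries.coeff_zero_eq_constantCoeff_apply, cc_coeff, hensel0]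
    calc ∑ j ∈ range (n - g₀.natDegree + 1),
          Polynomial.C (PowerSeries.constantCoeff (cc m n a g₀ h₀ j)) * Polynomial.X ^ j
        = ∑ j ∈ range (n - g₀.natDegree + 1), Polynomial.monomial j (h₀.coeff j) := by
          refine Finset.sum_congr rfl fun j _ => ?_
          rw [key, Polynomial.C_mul_X_pow_eq_monomial]
      _ = h₀ := (Polynomial.as_sum_range' h₀ (n - g₀.natDegree + 1) (by omega)).symm

/-- Differential Hensel's Lemma for `m > 1`: a coprime factorisation `f̄ = g₀ h₀` mod `t`
lifts to a factorisation `f = g h` in `O{x, δ_m}` with `deg g = deg g₀`, `ḡ = g₀`, `h̄ = h₀`.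
Twisted polynomials with coefficients in `O = ℂ[[t]]` are realised via their coefficient
functions and the associated operators on `K`. -/
theorem stmt_4 (m : ℕ) (hm : 1 < m) (n : ℕ) (a : ℕ → PowerSeries ℂ)
    (g₀ h₀ : Polynomial ℂ) (hf0 : red n a ≠ 0) (hfact : red n a = g₀ * h₀)
    (hcop : IsCoprime g₀ h₀) :
    ∃ b c : ℕ → PowerSeries ℂ,
      opO m n a = opO m g₀.natDegree b * opO m (n - g₀.natDegree) c ∧
      red g₀.natDegree b = g₀ ∧ red (n - g₀.natDegree) c = h₀ := by
  exact stmt_4' m hm n a g₀ h₀ hf0 hfact hcop
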